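/- The VC dimension of decision trees with a bounded number of nodes is O(K·d·log K): there exists a constant C > 0 such that for all d ≥ 1 and K ≥ 2, every finite set s of points in ℝ^d that is shattered by the class of functions {z ↦ eval(T, z) | T a decision tree over ℝ^d with at most K inner nodes} has cardinality at most C·K·d·log K. -/

import Mathlib

/-- A decision tree over `ℝ^d`: a leaf labeled by a Boolean, or an inner node with a
feature index, a real threshold, and left/right subtrees. -/
inductive DTree (d : ℕ) : Type
  | leaf (b : Bool) : DTree d
  | node (i : Fin d) (t : ℝ) (L R : DTree d) : DTree d

/-- Evaluation of a decision tree on a point `z : Fin d → ℝ`. -/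
noncomputable def DTree.eval {d : ℕ} : DTree d → (Fin d → ℝ) → Bool
  | .leaf b, _ => b
  | .node i t L R, z => if z i ≤ t then L.eval z else R.eval z

/-- The number of inner nodes of a decision tree. -/
def DTree.innerNodes {d : ℕ} : DTree d → ℕ
  | .leaf _ => 0
  | .node _ _ L R => 1 + L.innerNodes + R.innerNodes

namespace VCAux
variable {d : ℕ}

/-- Preorder serialization of a tree. -/
def enc : DTree d → List (Bool ⊕ Fin d × ℝ)

  | .leaf b => [Sum.inl b]
  | .node i t L R => Sum.inr (i, t) :: (enc L ++ enc R)

lemma enc_length (T : DTree d) : (enc T).length = 2 * T.innerNodes + 1 := by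
  induction T with
  | leaf b => simp [enc, DTree.innerNodes]
  | node i t L R ihL ihR =>
      simp [enc, DTree.innerNodes, ihL, ihR]; ring

lemma enc_prefix : ∀ (T₁ T₂ : DTree d) (l₁ l₂ : List (Bool ⊕ Fin d × ℝ)),
    enc T₁ ++ l₁ = enc T₂ ++ l₂ → T₁ = T₂ ∧ l₁ = l₂ := by
  intro T₁
  induction T₁ with
  | leaf b =>
      intro T₂ l₁ l₂ h
      cases T₂ with
      | leaf b' => simp [enc] at h; simp [h.1, h.2]
      | node i' t' L' R' => simp [enc] at h
  | node i t L R ihL ihR =>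
      intro T₂ l₁ l₂ h
      cases T₂ with
      | leaf b' => simp [enc] at h
      | node i' t' L' R' =>
          simp only [enc, List.cons_append, List.cons.injEq, List.append_assoc] at h
          obtain ⟨h0, hrest⟩ := h
          obtain ⟨hL, hrest2⟩ := ihL L' _ _ hrest
          obtain ⟨hR, hl⟩ := ihR R' _ _ hrest2
          have h0' : (i, t) = (i', t') := Sum.inr.inj h0
          obtain ⟨hi, ht⟩ := Prod.mk.injEq .. |>.mp h0'
          subst hL; subst hR; subst hl
          exact ⟨by rw [hi, ht], rfl⟩

end VCAux
namespace VCAux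
variable {d : ℕ}

/-- Canonical replacement threshold. -/
noncomputable def pick (s : Finset (Fin d → ℝ)) (B : ℝ) (i : Fin d) (t : ℝ) : ℝ :=
  if h : ((s.image fun p => p i).filter fun x => x ≤ t).Nonempty
  then ((s.image fun p => p i).filter fun x => x ≤ t).max' h else B

lemma pick_spec (s : Finset (Fin d → ℝ)) (B : ℝ) (i : Fin d) (t : ℝ)
    (hB : ∀ p ∈ s, B < p i) (p : Fin d → ℝ) (hp : p ∈ s) :
    (p i ≤ pick s B i t ↔ p i ≤ t) := by
  unfold pick
  split_ifs with h
  · constructor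
    · intro hle
      have hm := ((s.image fun p => p i).filter fun x => x ≤ t).max'_mem h
      have := (Finset.mem_filter.mp hm).2
      exact le_trans hle this
    · intro hle
      apply Finset.le_max'
      exact Finset.mem_filter.mpr ⟨Finset.mem_image_of_mem _ hp, hle⟩
  · constructor
    · intro hle; exact absurd (lt_of_lt_of_le (hB p hp) hle) (lt_irrefl B)
    · intro hle
      exact absurd ⟨p i, Finset.mem_filter.mpr ⟨Finset.mem_image_of_mem _ hp, hle⟩⟩ h

/-- Canonicalize all thresholds of a tree. -/
noncomputable def canon (s : Finset (Fin d → ℝ)) (B : ℝ) : DTree d → DTree d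
  | .leaf b => .leaf b
  | .node i t L R => .node i (pick s B i t) (canon s B L) (canon s B R)

lemma canon_innerNodes (s : Finset (Fin d → ℝ)) (B : ℝ) (T : DTree d) :
    (canon s B T).innerNodes = T.innerNodes := by
  induction T with
  | leaf b => rfl
  | node i t L R ihL ihR => simp [canon, DTree.innerNodes, ihL, ihR]

lemma canon_eval (s : Finset (Fin d → ℝ)) (B : ℝ) (hB : ∀ p ∈ s, ∀ i, B < p i)
    (T : DTree d) (p : Fin d → ℝ) (hp : p ∈ s) :
    (canon s B T).eval p = T.eval p := by
  induction T with
  | leaf b => rfl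
  | node i t L R ihL ihR =>
      simp only [canon, DTree.eval]
      rw [if_congr (pick_spec s B i t (fun q hq => hB q hq i) p hp) ihL ihR]

/-- All thresholds appearing in the canonical tree lie in `insert B Θ₀`. -/
lemma canon_mem (s : Finset (Fin d → ℝ)) (B : ℝ) (T : DTree d) :
    ∀ x ∈ enc (canon s B T), ∀ i t, x = Sum.inr (i, t) →
      t ∈ insert B (Finset.univ.biUnion fun j : Fin d => s.image fun p => p j) := by
  induction T with
  | leaf b => intro x hx i t hxt; simp [canon, enc] at hx; simp [hx] at hxt
  | node i t L R ihL ihR =>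
      intro x hx j u hxu
      simp only [canon, enc, List.mem_cons, List.mem_append] at hx
      rcases hx with h | h | h
      · subst h
        have : u = pick s B i t := by
          have := Sum.inr.inj hxu; exact (Prod.mk.injEq .. |>.mp this).2.symm
        subst this
        unfold pick
        split_ifs with hne
        · have hm := ((s.image fun p => p i).filter fun x => x ≤ t).max'_mem hne
          have := (Finset.mem_filter.mp hm).1
          exact Finset.mem_insert_of_mem (Finset.mem_biUnion.mpr ⟨i, Finset.mem_univ i, this⟩)
        · exact Finset.mem_insert_self _ _
      · exact ihL x h j u hxu
      · exact ihR x h j u hxu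

end VCAux
namespace VCAux
variable {d : ℕ}

/-- Token relabeling into the finite threshold set. -/
noncomputable def tokMap (Θ : Finset ℝ) (B : ℝ) (hB : B ∈ Θ) :
    (Bool ⊕ Fin d × ℝ) → (Bool ⊕ Fin d × {x : ℝ // x ∈ Θ})
  | .inl b => .inl b
  | .inr (i, t) => .inr (i, if h : t ∈ Θ then ⟨t, h⟩ else ⟨B, hB⟩)

lemma tokMap_inj (Θ : Finset ℝ) (B : ℝ) (hB : B ∈ Θ) :
    ∀ l₁ l₂ : List (Bool ⊕ Fin d × ℝ),
    (∀ x ∈ l₁, ∀ i t, x = Sum.inr (i, t) → t ∈ Θ) →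
    (∀ x ∈ l₂, ∀ i t, x = Sum.inr (i, t) → t ∈ Θ) →
    l₁.map (tokMap Θ B hB) = l₂.map (tokMap Θ B hB) → l₁ = l₂ := by
  intro l₁
  induction l₁ with
  | nil => intro l₂ _ _ h; cases l₂ <;> simp_all
  | cons a l ih =>
      intro l₂ h1 h2 h
      cases l₂ with
      | nil => simp at h
      | cons b l' =>
          simp only [List.map_cons, List.cons.injEq] at h
          obtain ⟨hab, htl⟩ := h
          have ha := h1 a List.mem_cons_self
          have hb := h2 b List.mem_cons_self
          have hab' : a = b := by
            cases a with
            | inl ba => cases b with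
              | inl bb => simpa [tokMap] using hab
              | inr pb => simp [tokMap] at hab
            | inr pa => cases b with
              | inl bb => simp [tokMap] at hab
              | inr pb =>
                  obtain ⟨ia, ta⟩ := pa
                  obtain ⟨ib, tb⟩ := pb
                  have hta : ta ∈ Θ := ha ia ta rfl
                  have htb : tb ∈ Θ := hb ib tb rfl
                  simp only [tokMap, dif_pos hta, dif_pos htb, Sum.inr.injEq,
                    Prod.mk.injEq, Subtype.mk.injEq] at hab
                  simp [hab.1, hab.2]
          rw [hab', ih l' (fun x hx => h1 x (List.mem_cons_of_mem a hx))
            (fun x hx => h2 x (List.mem_cons_of_mem b hx)) htl]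

lemma counting {K : ℕ} (hd : 1 ≤ d) (s : Finset (Fin d → ℝ)) (hs : s.Nonempty)
    (hsh : ∀ y : (Fin d → ℝ) → Bool,
      ∃ T : DTree d, T.innerNodes ≤ K ∧ ∀ p ∈ s, T.eval p = y p) :
    2 ^ s.card ≤ (3 + d * (d * s.card + 1)) ^ (2 * K + 1) := by
  classical
  set Θ₀ : Finset ℝ := Finset.univ.biUnion fun j : Fin d => s.image fun p => p j with hΘ₀
  have hΘ₀ne : Θ₀.Nonempty := by
    obtain ⟨p, hp⟩ := hs
    exact ⟨p ⟨0, hd⟩, Finset.mem_biUnion.mpr ⟨⟨0, hd⟩, Finset.mem_univ _,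
      Finset.mem_image_of_mem _ hp⟩⟩
  set B : ℝ := Θ₀.min' hΘ₀ne - 1 with hBdef
  have hBlt : ∀ x ∈ Θ₀, B < x := by
    intro x hx
    have h1 : Θ₀.min' hΘ₀ne ≤ x := Θ₀.min'_le x hx
    have h2 : B < Θ₀.min' hΘ₀ne := by rw [hBdef]; linarith
    linarith
  have hB : ∀ p ∈ s, ∀ i, B < p i := fun p hp i =>
    hBlt _ (Finset.mem_biUnion.mpr ⟨i, Finset.mem_univ _, Finset.mem_image_of_mem _ hp⟩)
  set Θ : Finset ℝ := insert B Θ₀ with hΘdef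
  have hBΘ : B ∈ Θ := Finset.mem_insert_self _ _
  -- choose a tree for each labeling of s
  set ext : ({p // p ∈ s} → Bool) → (Fin d → ℝ) → Bool :=
    fun y p => if h : p ∈ s then y ⟨p, h⟩ else false with hext
  set Tr : ({p // p ∈ s} → Bool) → DTree d :=
    fun y => canon s B (Classical.choose (hsh (ext y))) with hTr
  have hTr_eval : ∀ y, ∀ p (hp : p ∈ s), (Tr y).eval p = y ⟨p, hp⟩ := by
    intro y p hp
    have hc := Classical.choose_spec (hsh (ext y))
    rw [hTr]
    rw [canon_eval s B hB _ p hp, hc.2 p hp]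
    simp [hext, hp]
  have hTr_len : ∀ y, (enc (Tr y)).length ≤ 2 * K + 1 := by
    intro y
    have hc := (Classical.choose_spec (hsh (ext y))).1
    rw [enc_length, hTr, canon_innerNodes]
    omega
  have hTr_mem : ∀ y, ∀ x ∈ enc (Tr y), ∀ i t, x = Sum.inr (i, t) → t ∈ Θ := by
    intro y
    exact canon_mem s B _
  set Φ : ({p // p ∈ s} → Bool) →
      (Fin (2 * K + 1) → Option (Bool ⊕ Fin d × {x : ℝ // x ∈ Θ})) :=
    fun y j => ((enc (Tr y)).map (tokMap Θ B hBΘ))[(j : ℕ)]? with hΦ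
  have hinj : Function.Injective Φ := by
    intro y₁ y₂ h
    have hlist : (enc (Tr y₁)).map (tokMap Θ B hBΘ) = (enc (Tr y₂)).map (tokMap Θ B hBΘ) := by
      apply List.ext_getElem?
      intro n
      by_cases hn : n < 2 * K + 1
      · exact congrFun h ⟨n, hn⟩
      · rw [List.getElem?_eq_none, List.getElem?_eq_none]
        · rw [List.length_map]; exact le_trans (hTr_len y₂) (Nat.le_of_not_lt hn)
        · rw [List.length_map]; exact le_trans (hTr_len y₁) (Nat.le_of_not_lt hn)
    have henc : enc (Tr y₁) = enc (Tr y₂) :=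
      tokMap_inj Θ B hBΘ _ _ (hTr_mem y₁) (hTr_mem y₂) hlist
    have hT : Tr y₁ = Tr y₂ := by
      have := enc_prefix (Tr y₁) (Tr y₂) [] [] (by simpa using henc)
      exact this.1
    funext p
    have := hTr_eval y₁ p.1 p.2
    rw [hT, hTr_eval y₂ p.1 p.2] at this
    exact this.symm
  have hcard := Fintype.card_le_of_injective Φ hinj
  have hΘcard : Θ.card ≤ d * s.card + 1 := by
    calc Θ.card ≤ Θ₀.card + 1 := Finset.card_insert_le _ _
    _ ≤ (∑ _j : Fin d, s.card) + 1 := by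
        have h1 : Θ₀.card ≤ ∑ j : Fin d, ((s.image fun p => p j)).card :=
          Finset.card_biUnion_le
        have h3 : (∑ j : Fin d, ((s.image fun p => p j)).card) ≤ ∑ _j : Fin d, s.card :=
          Finset.sum_le_sum (fun j _ => Finset.card_image_le)
        exact Nat.add_le_add_right (le_trans h1 h3) 1
    _ = d * s.card + 1 := by simp [mul_comm]
  have h1 : Fintype.card ({p // p ∈ s} → Bool) = 2 ^ s.card := by
    simp [Fintype.card_fun]
  have h2 : Fintype.card (Fin (2 * K + 1) → Option (Bool ⊕ Fin d × {x : ℝ // x ∈ Θ}))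
      = (2 + d * Θ.card + 1) ^ (2 * K + 1) := by
    simp [Fintype.card_fun, Fintype.card_option, Fintype.card_sum, Fintype.card_prod,
      Fintype.card_coe]
  rw [h1, h2] at hcard
  calc 2 ^ s.card ≤ (2 + d * Θ.card + 1) ^ (2 * K + 1) := hcard
  _ ≤ (3 + d * (d * s.card + 1)) ^ (2 * K + 1) := by
      apply Nat.pow_le_pow_left
      have := Nat.mul_le_mul_left d hΘcard
      omega

end VCAux
lemma arith_main (N D Kr : ℝ) (hN : 1 ≤ N) (hD : 1 ≤ D) (hK : 2 ≤ Kr)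
    (h : N * Real.log 2 ≤ (2 * Kr + 1) * Real.log (3 + D * (D * N + 1))) :
    N ≤ 1000 * Kr * D * Real.log Kr := by
  set L := Real.log Kr with hLdef
  have hlog2_lb : (0.6931 : ℝ) < Real.log 2 := by
    have := Real.log_two_gt_d9; linarith
  have hlog2_ub : Real.log 2 < (0.6932 : ℝ) := by
    have := Real.log_two_lt_d9; linarith
  have hL2 : Real.log 2 ≤ L := Real.log_le_log (by norm_num) hK
  have hLpos : (0.6931 : ℝ) < L := lt_of_lt_of_le hlog2_lb hL2
  -- bound the log of the alphabet size
  have hA : (3 + D * (D * N + 1)) ≤ 5 * N * D ^ 2 := by nlinarith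
  have hApos : (0:ℝ) < 3 + D * (D * N + 1) := by nlinarith
  have hlogA : Real.log (3 + D * (D * N + 1)) ≤ 4 + Real.log N + 2 * D := by
    have h1 : Real.log (3 + D * (D * N + 1)) ≤ Real.log (5 * N * D ^ 2) :=
      Real.log_le_log hApos hA
    have h2 : Real.log (5 * N * D ^ 2) = Real.log 5 + Real.log N + 2 * Real.log D := by
      rw [Real.log_mul (by positivity) (by positivity),
        Real.log_mul (by norm_num) (by positivity), Real.log_pow]
      push_cast; ring
    have h3 : Real.log 5 ≤ 4 := by
      have := Real.log_le_sub_one_of_pos (x := 5) (by norm_num); linarith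
    have h4 : Real.log D ≤ D := by
      have := Real.log_le_sub_one_of_pos (x := D) (by linarith); linarith
    linarith
  have hlogApos : (0:ℝ) ≤ Real.log (3 + D * (D * N + 1)) :=
    Real.log_nonneg (by nlinarith)
  -- main inequality with expanded log
  have hmain : N * Real.log 2 ≤ 3 * Kr * (4 + Real.log N + 2 * D) := by
    have h5 : (2 * Kr + 1) ≤ 3 * Kr := by linarith
    have h6 : (2 * Kr + 1) * Real.log (3 + D * (D * N + 1)) ≤
        3 * Kr * (4 + Real.log N + 2 * D) := by
      apply mul_le_mul h5 hlogA hlogApos (by linarith)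
    linarith
  -- self-bounding trick for log N
  set b := 24 * Kr / Real.log 2 with hbdef
  have hbpos : (0:ℝ) < b := by
    apply div_pos (by linarith) (by linarith)
  have hlogN : Real.log N ≤ Real.log b + N * Real.log 2 / (24 * Kr) := by
    have h7 : Real.log (N / b) ≤ N / b - 1 :=
      Real.log_le_sub_one_of_pos (by positivity)
    have h8 : Real.log (N / b) = Real.log N - Real.log b :=
      Real.log_div (by linarith) (ne_of_gt hbpos)
    have h9 : N / b = N * Real.log 2 / (24 * Kr) := by
      rw [hbdef]; field_simp
    rw [h8, h9] at h7
    linarith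
  have hlogb : Real.log b ≤ 36 * L := by
    have h10 : Real.log b = Real.log 24 + L - Real.log (Real.log 2) := by
      rw [hbdef, Real.log_div (by positivity) (by linarith),
        Real.log_mul (by norm_num) (by linarith)]
    have h11 : Real.log 24 ≤ 23 := by
      have := Real.log_le_sub_one_of_pos (x := 24) (by norm_num); linarith
    have h12 : (-0.45 : ℝ) ≤ Real.log (Real.log 2) := by
      have hx : Real.log (1 / Real.log 2) ≤ 1 / Real.log 2 - 1 :=
        Real.log_le_sub_one_of_pos (by positivity)
      have hy : Real.log (1 / Real.log 2) = - Real.log (Real.log 2) := by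
        rw [Real.log_div (by norm_num) (by linarith)]; simp
      have hz : 1 / Real.log 2 ≤ 1 / 0.6931 := by
        apply one_div_le_one_div_of_le (by norm_num) (le_of_lt hlog2_lb)
      rw [hy] at hx
      have : (1:ℝ)/0.6931 - 1 ≤ 0.45 := by norm_num
      linarith
    rw [h10]
    nlinarith [hLpos]
  -- combine
  have hKpos : (0:ℝ) < Kr := by linarith
  have hcomb : N * Real.log 2 * (7 / 8) ≤ 12 * Kr + 6 * Kr * D + 108 * Kr * L := by
    have h13 : 3 * Kr * Real.log N ≤ 108 * Kr * L + N * Real.log 2 / 8 := by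
      have := mul_le_mul_of_nonneg_left hlogN (by linarith : (0:ℝ) ≤ 3 * Kr)
      have heq : 3 * Kr * (N * Real.log 2 / (24 * Kr)) = N * Real.log 2 / 8 := by
        field_simp; ring
      nlinarith [hlogb, hKpos]
    nlinarith [hmain]
  have hDpos : (0:ℝ) ≤ D := by linarith
  have hLnn : (0:ℝ) ≤ L := by linarith
  have hNnn : (0:ℝ) ≤ N := by linarith
  have hDL : (0.6931:ℝ) ≤ D * L := by
    have := mul_le_mul_of_nonneg_right hD hLnn
    linarith
  have hX : (0:ℝ) ≤ Kr * (D * L) := mul_nonneg hKpos.le (mul_nonneg hDpos hLnn)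
  have e1 : 12 * Kr ≤ 18 * (Kr * (D * L)) := by
    have := mul_le_mul_of_nonneg_left hDL hKpos.le
    linarith
  have e2 : 6 * Kr * D ≤ 9 * (Kr * (D * L)) := by
    have h9L : (6:ℝ) ≤ 9 * L := by linarith
    have hKD : (0:ℝ) ≤ Kr * D := mul_nonneg hKpos.le hDpos
    have := mul_le_mul_of_nonneg_left h9L hKD
    linarith
  have e3 : 108 * Kr * L ≤ 108 * (Kr * (D * L)) := by
    have hKL : (0:ℝ) ≤ Kr * L := mul_nonneg hKpos.le hLnn
    have := mul_le_mul_of_nonneg_left hD hKL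
    linarith
  have hNfin : N * 0.6931 * (7 / 8) ≤ 135 * (Kr * (D * L)) := by
    have hm : (0.6931:ℝ) * N ≤ Real.log 2 * N := mul_le_mul_of_nonneg_right hlog2_lb.le hNnn
    linarith [hcomb, e1, e2, e3, hm]
  have hgoal : 1000 * Kr * D * L = 1000 * (Kr * (D * L)) := by ring
  rw [hgoal]
  linarith

/-- the VC dimension of decision trees with at most `K` inner nodes over
`ℝ^d` is `O(K·d·log K)`: every finite set shattered by this class has cardinality at
most `C·K·d·log K` for a universal constant `C > 0`. -/
theorem vc_dimension_bounded_decision_trees :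
    ∃ C : ℝ, 0 < C ∧
      ∀ (d K : ℕ), 1 ≤ d → 2 ≤ K →
      ∀ s : Finset (Fin d → ℝ),
        (∀ y : (Fin d → ℝ) → Bool,
          ∃ T : DTree d, T.innerNodes ≤ K ∧ ∀ p ∈ s, T.eval p = y p) →
        (s.card : ℝ) ≤ C * K * d * Real.log K := by
  refine ⟨1000, by norm_num, ?_⟩
  intro d K hd hK s hsh
  have hK1 : (1:ℝ) < (K:ℝ) := by exact_mod_cast Nat.lt_of_lt_of_le one_lt_two hK
  have hKlog : 0 < Real.log K := Real.log_pos hK1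
  rcases Finset.eq_empty_or_nonempty s with hse | hsne
  · rw [hse]
    simp only [Finset.card_empty, Nat.cast_zero]
    have : (0:ℝ) < 1000 * K * d * Real.log K := by
      apply mul_pos (mul_pos (mul_pos (by norm_num) (by linarith)) _) hKlog
      exact_mod_cast Nat.lt_of_lt_of_le Nat.zero_lt_one hd
    linarith
  · have hcount := VCAux.counting hd s hsne hsh
    have hreal : ((2:ℝ)) ^ s.card ≤ ((3 + d * (d * s.card + 1) : ℕ) : ℝ) ^ (2 * K + 1) := by
      exact_mod_cast hcount
    have hbase : (0:ℝ) < ((3 + d * (d * s.card + 1) : ℕ) : ℝ) := by positivity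
    have hlog := Real.log_le_log (by positivity) hreal
    rw [Real.log_pow, Real.log_pow] at hlog
    push_cast at hlog
    have hN1 : (1:ℝ) ≤ (s.card : ℝ) := by
      have := Finset.card_pos.mpr hsne
      exact_mod_cast this
    have hD1 : (1:ℝ) ≤ (d : ℝ) := by exact_mod_cast hd
    have hK2 : (2:ℝ) ≤ (K : ℝ) := by exact_mod_cast hK
    have := arith_main (s.card : ℝ) (d : ℝ) (K : ℝ) hN1 hD1 hK2 (by linarith [hlog])
    linarith
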